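/- Let f : ℝⁿ → ℝ be differentiable, μ-strongly convex, and L-smooth with minimizer x* and κ = L/μ. Let x with ∇f(x) ≠ 0, let y = x - t∇f(x) with f(y) = f(x), suppose ∇f(x) and ∇f(y) are linearly independent with angle θ ∈ (0, π), and let x⁺ minimize f over Π = {x + α∇f(x) + β∇f(y) : α, β ∈ ℝ}. Then f(x⁺) - f(x*) ≤ ((κ-1)/(κ+1) - sin²θ/(4κ²)) (f(x) - f(x*)). -/

import Mathlib

open RealInnerProductSpace

variable {n : ℕ}
local notation "E" => EuclideanSpace ℝ (Fin n)

-- derivative of line composition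
theorem line_deriv (f : E → ℝ) (g : E → E) (hgrad : ∀ x, HasGradientAt f (g x) x)
    (v d : E) (s : ℝ) :
    HasDerivAt (fun s : ℝ => f (v + s • d)) ⟪g (v + s • d), d⟫ s := by
  have hc : HasDerivAt (fun s : ℝ => v + s • d) d s := by
    simpa using ((hasDerivAt_id s).smul_const d).const_add v
  have hf := (hgrad (v + s • d)).hasFDerivAt
  have := hf.comp_hasDerivAt s hc
  simpa [Function.comp_def] using this

theorem descent (f : E → ℝ) (g : E → E) (L : ℝ) (hL : 0 ≤ L)
    (hgrad : ∀ x, HasGradientAt f (g x) x)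
    (hsmooth : ∀ x y : E, ‖g x - g y‖ ≤ L * ‖x - y‖) (v w : E) :
    f w ≤ f v + ⟪g v, w - v⟫ + L / 2 * ‖w - v‖ ^ 2 := by
  have hgcont : Continuous g := by
    apply (LipschitzWith.of_dist_le_mul (K := ⟨L, hL⟩) ?_).continuous
    intro a b
    rw [dist_eq_norm, dist_eq_norm]; exact hsmooth a b
  set d := w - v with hd
  have hder : ∀ s : ℝ, HasDerivAt (fun s : ℝ => f (v + s • d)) ⟪g (v + s • d), d⟫ s :=
    fun s => line_deriv f g hgrad v d s
  have hcont : Continuous fun s : ℝ => ⟪g (v + s • d), d⟫ := by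
    apply Continuous.inner (hgcont.comp (by continuity)) continuous_const
  have hint : f (v + (1:ℝ) • d) - f (v + (0:ℝ) • d)
      = ∫ s in (0:ℝ)..1, ⟪g (v + s • d), d⟫ := by
    rw [intervalIntegral.integral_eq_sub_of_hasDerivAt (fun s _ => hder s)
      (hcont.intervalIntegrable 0 1)]
  have hbound : ∀ s ∈ Set.Icc (0:ℝ) 1, ⟪g (v + s • d), d⟫ ≤ ⟪g v, d⟫ + L * ‖d‖^2 * s := by
    intro s hs
    have h1 : ⟪g (v + s • d) - g v, d⟫ ≤ ‖g (v + s • d) - g v‖ * ‖d‖ :=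
      real_inner_le_norm _ _
    have h2 : ‖g (v + s • d) - g v‖ ≤ L * (s * ‖d‖) := by
      have := hsmooth (v + s • d) v
      simpa [norm_smul, abs_of_nonneg hs.1] using this
    have h3 : ‖g (v + s • d) - g v‖ * ‖d‖ ≤ L * (s * ‖d‖) * ‖d‖ :=
      mul_le_mul_of_nonneg_right h2 (norm_nonneg _)
    have h4 : ⟪g (v + s • d) - g v, d⟫ = ⟪g (v + s • d), d⟫ - ⟪g v, d⟫ := by
      rw [inner_sub_left]
    nlinarith [h1, h3, h4]
  have hmono : (∫ s in (0:ℝ)..1, ⟪g (v + s • d), d⟫)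
      ≤ ∫ s in (0:ℝ)..1, (⟪g v, d⟫ + L * ‖d‖^2 * s) := by
    apply intervalIntegral.integral_mono_on (by norm_num)
      (hcont.intervalIntegrable 0 1)
      ((continuous_const.add (continuous_const.mul continuous_id)).intervalIntegrable 0 1)
    intro s hs; exact hbound s hs
  have hval : (∫ s in (0:ℝ)..1, (⟪g v, d⟫ + L * ‖d‖^2 * s)) = ⟪g v, d⟫ + L / 2 * ‖d‖^2 := by
    have hI : IntervalIntegrable (fun s : ℝ => L * ‖d‖^2 * s) MeasureTheory.volume 0 1 :=
      Continuous.intervalIntegrable (by continuity) 0 1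
    rw [intervalIntegral.integral_add intervalIntegrable_const hI]
    rw [intervalIntegral.integral_const_mul]
    simp [integral_id]
    ring
  have : f w - f v ≤ ⟪g v, d⟫ + L / 2 * ‖d‖^2 := by
    have := hint
    simp only [one_smul, zero_smul, add_zero] at this
    have hw : v + d = w := by rw [hd]; abel
    rw [hw] at this
    calc f w - f v = ∫ s in (0:ℝ)..1, ⟪g (v + s • d), d⟫ := this
    _ ≤ _ := le_trans hmono (le_of_eq hval)
  linarith

theorem interp (f : E → ℝ) (g : E → E) (μ L : ℝ) (hμ : 0 < μ) (hμL : μ ≤ L)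
    (hgrad : ∀ x, HasGradientAt f (g x) x)
    (hsc : ∀ x y : E, f y ≥ f x + ⟪g x, y - x⟫ + μ / 2 * ‖y - x‖ ^ 2)
    (hsmooth : ∀ x y : E, ‖g x - g y‖ ≤ L * ‖x - y‖) (u v : E) :
    f u + ⟪g u, v - u⟫ + 1 / (2 * L) * ‖g v - g u‖ ^ 2 ≤ f v := by
  have hL : 0 < L := lt_of_lt_of_le hμ hμL
  set w := v - (1 / L) • (g v - g u) with hw
  have hdesc := descent f g L hL.le hgrad hsmooth v w
  have hconv := hsc u w
  have hμterm : (0:ℝ) ≤ μ / 2 * ‖w - u‖ ^ 2 := by positivity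
  have e1 : ⟪g v, w - v⟫ = -(1/L) * ⟪g v, g v - g u⟫ := by
    rw [hw]; rw [show v - (1 / L) • (g v - g u) - v = -((1/L) • (g v - g u)) by abel]
    rw [inner_neg_right, real_inner_smul_right]; ring
  have e2 : ‖w - v‖ ^ 2 = (1/L)^2 * ‖g v - g u‖ ^ 2 := by
    rw [hw, show v - (1 / L) • (g v - g u) - v = -((1/L) • (g v - g u)) by abel]
    rw [norm_neg, norm_smul, Real.norm_eq_abs, abs_of_pos (by positivity : (0:ℝ) < 1/L),
      mul_pow]
  have e3 : ⟪g u, w - u⟫ = ⟪g u, v - u⟫ - (1/L) * ⟪g u, g v - g u⟫ := by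
    rw [hw, show v - (1 / L) • (g v - g u) - u = (v - u) - (1/L) • (g v - g u) by abel]
    rw [inner_sub_right, real_inner_smul_right]
  have e4 : ⟪g v, g v - g u⟫ - ⟪g u, g v - g u⟫ = ‖g v - g u‖ ^ 2 := by
    rw [← inner_sub_left, real_inner_self_eq_norm_sq]
  have hL2 : (1/L) * ‖g v - g u‖^2 - L/2 * ((1/L)^2 * ‖g v - g u‖^2)
      = 1/(2*L) * ‖g v - g u‖^2 := by field_simp; ring
  have e5 : (1/L) * ⟪g v, g v - g u⟫ - (1/L) * ⟪g u, g v - g u⟫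
      = (1/L) * ‖g v - g u‖ ^ 2 := by rw [← mul_sub, e4]
  rw [e1, e2] at hdesc
  rw [e3] at hconv
  have hL3 : L/2 * ((1/L)^2 * ‖g v - g u‖^2) = 1/(2*L) * ‖g v - g u‖^2 := by
    field_simp
  rw [hL3] at hdesc
  have hL4 : -(1/L) * ⟪g v, g v - g u⟫ + (1/L) * ⟪g u, g v - g u⟫
      = -((1/L) * ‖g v - g u‖^2) := by linarith [e5]
  linarith [hdesc, hconv, hμterm, hL4, hL2]

theorem plq (f : E → ℝ) (g : E → E) (μ : ℝ) (hμ : 0 < μ)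
    (hsc : ∀ x y : E, f y ≥ f x + ⟪g x, y - x⟫ + μ / 2 * ‖y - x‖ ^ 2)
    (xs : EuclideanSpace ℝ (Fin n)) (u : E) :
    f u - f xs ≤ ‖g u‖ ^ 2 / (2 * μ) := by
  have h := hsc u xs
  have h2 : ⟪g u, xs - u⟫ ≥ -(‖g u‖ * ‖xs - u‖) := by
    have := abs_real_inner_le_norm (g u) (xs - u)
    have := neg_abs_le ⟪g u, xs - u⟫
    linarith [abs_le.mp (abs_real_inner_le_norm (g u) (xs - u))]
  have h3 : f u - f xs ≤ ‖g u‖ * ‖xs - u‖ - μ/2 * ‖xs - u‖^2 := by linarith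
  rw [le_div_iff₀ (by positivity : (0:ℝ) < 2*μ)]
  nlinarith [mul_le_mul_of_nonneg_right h3 (by positivity : (0:ℝ) ≤ 2*μ),
    sq_nonneg (‖g u‖ - μ * ‖xs - u‖)]

theorem linesearch (f : E → ℝ) (g : E → E) (μ : ℝ) (hμ : 0 < μ)
    (hgrad : ∀ x, HasGradientAt f (g x) x)
    (hsc : ∀ x y : E, f y ≥ f x + ⟪g x, y - x⟫ + μ / 2 * ‖y - x‖ ^ 2)
    (u : E) :
    ∃ s : ℝ, (∀ s' : ℝ, f (u - s • g u) ≤ f (u - s' • g u)) ∧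
      ⟪g (u - s • g u), g u⟫ = 0 := by
  have hfc : Continuous f :=
    continuous_iff_continuousAt.mpr fun z => (hgrad z).hasFDerivAt.continuousAt
  set h : ℝ → ℝ := fun s => f (u - s • g u) with hh
  have hhc : Continuous h := hfc.comp (continuous_const.sub (continuous_id.smul continuous_const))
  obtain ⟨s₀, hs₀mem, hs₀min⟩ := isCompact_Icc.exists_isMinOn
    (⟨0, Set.left_mem_Icc.mpr (by positivity : (0:ℝ) ≤ 2/μ)⟩ : (Set.Icc (0:ℝ) (2/μ)).Nonempty)
    hhc.continuousOn
  have hlow : ∀ s' : ℝ, h s' ≥ h 0 + (μ/2 * s'^2 - s') * ‖g u‖^2 := by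
    intro s'
    have := hsc u (u - s' • g u)
    have e1 : ⟪g u, (u - s' • g u) - u⟫ = -s' * ‖g u‖^2 := by
      rw [show (u - s' • g u) - u = -(s' • g u) by abel, inner_neg_right,
        real_inner_smul_right, real_inner_self_eq_norm_sq]
      ring
    have e2 : ‖(u - s' • g u) - u‖^2 = s'^2 * ‖g u‖^2 := by
      rw [show (u - s' • g u) - u = -(s' • g u) by abel, norm_neg, norm_smul,
        Real.norm_eq_abs, mul_pow, sq_abs]
    rw [e1, e2] at this
    have h0 : h 0 = f u := by simp [hh]
    rw [h0]
    simp only [hh]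
    nlinarith [this]
  have hglobal : ∀ s' : ℝ, h s₀ ≤ h s' := by
    intro s'
    by_cases hmem : s' ∈ Set.Icc (0:ℝ) (2/μ)
    · exact hs₀min hmem
    · have h0 : h s₀ ≤ h 0 := hs₀min (Set.left_mem_Icc.mpr (by positivity))
      have := hlow s'
      simp only [Set.mem_Icc, not_and_or, not_le] at hmem
      have hnn : (0:ℝ) ≤ (μ/2 * s'^2 - s') * ‖g u‖^2 := by
        apply mul_nonneg _ (by positivity)
        rcases hmem with hneg | hbig
        · nlinarith
        · have : 2/μ < s' := hbig
          have h2 : 2 < μ * s' := by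
            rw [div_lt_iff₀ hμ] at this; linarith
          nlinarith
      linarith
  have hder : HasDerivAt h ⟪g (u - s₀ • g u), -g u⟫ s₀ := by
    have := line_deriv f g hgrad u (-g u) s₀
    have heq : (fun s : ℝ => f (u + s • (-g u))) = h := by
      funext s; simp [hh, smul_neg, sub_eq_add_neg]
    have heq2 : u + s₀ • (-g u) = u - s₀ • g u := by
      rw [smul_neg, sub_eq_add_neg]
    rw [heq, heq2] at this
    exact this
  have hloc : IsLocalMin h s₀ := Filter.Eventually.of_forall hglobal
  have hzero := hloc.hasDerivAt_eq_zero hder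
  refine ⟨s₀, hglobal, ?_⟩
  rw [inner_neg_right] at hzero
  linarith [hzero]

theorem contraction (f : E → ℝ) (g : E → E) (μ L : ℝ) (hμ : 0 < μ) (hμL : μ ≤ L)
    (hgrad : ∀ x, HasGradientAt f (g x) x)
    (hsc : ∀ x y : E, f y ≥ f x + ⟪g x, y - x⟫ + μ / 2 * ‖y - x‖ ^ 2)
    (hsmooth : ∀ x y : E, ‖g x - g y‖ ≤ L * ‖x - y‖)
    (xs : E) (u : E) (s : ℝ) (horth : ⟪g (u - s • g u), g u⟫ = 0) :
    f (u - s • g u) - f xs ≤ (L - μ) / (L + μ) * (f u - f xs) := by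
  have hL : 0 < L := lt_of_lt_of_le hμ hμL
  set up := u - s • g u with hup
  have hi := interp f g μ L hμ hμL hgrad hsc hsmooth up u
  have e1 : ⟪g up, u - up⟫ = 0 := by
    rw [hup, show u - (u - s • g u) = s • g u by abel, real_inner_smul_right, horth, mul_zero]
  have e2 : ‖g u - g up‖^2 = ‖g u‖^2 + ‖g up‖^2 := by
    rw [norm_sub_sq_real, real_inner_comm, horth]
    ring
  have p1 : 2 * μ * (f u - f xs) ≤ ‖g u‖^2 := by
    have := plq f g μ hμ hsc xs u
    rw [le_div_iff₀ (by positivity : (0:ℝ) < 2*μ)] at this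
    linarith
  have p2 : 2 * μ * (f up - f xs) ≤ ‖g up‖^2 := by
    have := plq f g μ hμ hsc xs up
    rw [le_div_iff₀ (by positivity : (0:ℝ) < 2*μ)] at this
    linarith
  rw [e1, e2] at hi
  have hkey : (f up - f xs) * (L + μ) ≤ (f u - f xs) * (L - μ) := by
    have h2L : (0:ℝ) < 2 * L := by positivity
    have := mul_le_mul_of_nonneg_left (add_le_add p1 p2 : 2*μ*(f u - f xs) + 2*μ*(f up - f xs) ≤ ‖g u‖^2 + ‖g up‖^2)
      (by positivity : (0:ℝ) ≤ 1/(2*L))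
    have hi2 : f up + 1/(2*L) * (2*μ*(f u - f xs) + 2*μ*(f up - f xs)) ≤ f u := by
      linarith
    have hfrac : 1/(2*L) * (2*μ*(f u - f xs) + 2*μ*(f up - f xs)) * L
        = μ*(f u - f xs) + μ*(f up - f xs) := by field_simp
    nlinarith [mul_le_mul_of_nonneg_right hi2 hL.le]
  rw [div_mul_eq_mul_div, le_div_iff₀ (by positivity : (0:ℝ) < L + μ)]
  linarith [hkey]

/-- Improved per-step rate via level-set symmetry:
f(x⁺) - f(x*) ≤ ((κ-1)/(κ+1) - sin²θ/(4κ²)) (f(x) - f(x*)), κ = L/μ. -/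
theorem stmt_19 {n : ℕ} (f : EuclideanSpace ℝ (Fin n) → ℝ)
    (g : EuclideanSpace ℝ (Fin n) → EuclideanSpace ℝ (Fin n)) (μ L : ℝ)
    (hμ : 0 < μ) (hμL : μ ≤ L)
    (hgrad : ∀ x, HasGradientAt f (g x) x)
    (hsc : ∀ x y : EuclideanSpace ℝ (Fin n),
      f y ≥ f x + ⟪g x, y - x⟫ + μ / 2 * ‖y - x‖ ^ 2)
    (hsmooth : ∀ x y : EuclideanSpace ℝ (Fin n), ‖g x - g y‖ ≤ L * ‖x - y‖)
    (xs : EuclideanSpace ℝ (Fin n)) (hmin : ∀ z, f xs ≤ f z)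
    (x : EuclideanSpace ℝ (Fin n)) (hx : g x ≠ 0)
    (t : ℝ) (y : EuclideanSpace ℝ (Fin n)) (hy : y = x - t • g x)
    (hlevel : f y = f x)
    (hLI : LinearIndependent ℝ ![g x, g y])
    (xp : EuclideanSpace ℝ (Fin n))
    (hmem : ∃ α β : ℝ, xp = x + α • g x + β • g y)
    (hpmin : ∀ α β : ℝ, f xp ≤ f (x + α • g x + β • g y)) :
    f xp - f xs ≤
      ((L / μ - 1) / (L / μ + 1) -
        Real.sin (InnerProductGeometry.angle (g x) (g y)) ^ 2 / (4 * (L / μ) ^ 2)) *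
        (f x - f xs) := by
  have hL : 0 < L := lt_of_lt_of_le hμ hμL
  have hgy : g y ≠ 0 := by
    have := hLI.ne_zero 1
    simpa using this
  have hX : (0:ℝ) < ‖g x‖^2 := by
    have := norm_pos_iff.mpr hx; positivity
  have hY : (0:ℝ) < ‖g y‖^2 := by
    have := norm_pos_iff.mpr hgy; positivity
  -- line searches
  obtain ⟨s₁, hmin1, horth1⟩ := linesearch f g μ hμ hgrad hsc x
  obtain ⟨s₂, hmin2, horth2⟩ := linesearch f g μ hμ hgrad hsc y
  set a := x - s₁ • g x with ha
  set b := y - s₂ • g y with hb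
  have hca : f a - f xs ≤ (L - μ) / (L + μ) * (f x - f xs) :=
    contraction f g μ L hμ hμL hgrad hsc hsmooth xs x s₁ horth1
  have hcb : f b - f xs ≤ (L - μ) / (L + μ) * (f x - f xs) := by
    have := contraction f g μ L hμ hμL hgrad hsc hsmooth xs y s₂ horth2
    rwa [hlevel] at this
  -- s₂ ≥ 1/L
  have hs₂ : 1 / L ≤ s₂ := by
    have hi1 := interp f g μ L hμ hμL hgrad hsc hsmooth b y
    have hi2 := interp f g μ L hμ hμL hgrad hsc hsmooth y b
    have e1 : ⟪g b, y - b⟫ = 0 := by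
      rw [hb, show y - (y - s₂ • g y) = s₂ • g y by abel, real_inner_smul_right, horth2,
        mul_zero]
    have e2 : ⟪g y, b - y⟫ = -s₂ * ‖g y‖^2 := by
      rw [hb, show (y - s₂ • g y) - y = -(s₂ • g y) by abel, inner_neg_right,
        real_inner_smul_right, real_inner_self_eq_norm_sq]
      ring
    have e3 : ‖g y - g b‖^2 = ‖g y‖^2 + ‖g b‖^2 := by
      rw [norm_sub_sq_real, real_inner_comm, horth2]; ring
    have e4 : ‖g b - g y‖^2 = ‖g y - g b‖^2 := by rw [norm_sub_rev]
    rw [e1] at hi1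
    rw [e2, e4, e3] at hi2
    rw [e3] at hi1
    have hgb : (0:ℝ) ≤ ‖g b‖^2 := by positivity
    have hsum : -s₂ * ‖g y‖^2 + 1/L * (‖g y‖^2 + ‖g b‖^2) ≤ 0 := by
      have : 1/(2*L) * (‖g y‖^2 + ‖g b‖^2) + 1/(2*L) * (‖g y‖^2 + ‖g b‖^2)
          = 1/L * (‖g y‖^2 + ‖g b‖^2) := by field_simp; ring
      linarith [hi1, hi2]
    have h1L : 1/L * (‖g y‖^2 + ‖g b‖^2) ≥ 1/L * ‖g y‖^2 := by
      apply mul_le_mul_of_nonneg_left _ (by positivity : (0:ℝ) ≤ 1/L)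
      linarith
    have : (1/L) * ‖g y‖^2 ≤ s₂ * ‖g y‖^2 := by linarith
    exact le_of_mul_le_mul_right (by linarith) hY
  -- midpoint
  set α : ℝ := -((s₁ + t)/2) with hα
  set β : ℝ := -(s₂/2) with hβ
  set m := x + α • g x + β • g y with hm
  have hmab : (2:ℝ) • m = a + b := by
    rw [hm, ha, hb, hy, hα, hβ]
    module
  have hfm : f xp ≤ f m := hpmin α β
  -- midpoint strong convexity
  have hma : a - m = m - b := by
    have : a + b - (2:ℝ) • m = 0 := by rw [hmab]; abel
    have h2 : a - m - (m - b) = a + b - (2:ℝ) • m := by module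
    rw [this] at h2
    have := sub_eq_zero.mp h2
    exact this
  have hsca := hsc m a
  have hscb := hsc m b
  have einner : ⟪g m, a - m⟫ + ⟪g m, b - m⟫ = 0 := by
    rw [← inner_add_right]
    have : (a - m) + (b - m) = a + b - (2:ℝ) • m := by module
    rw [this, hmab, sub_self, inner_zero_right]
  have enorm : ‖a - m‖^2 = ‖a - b‖^2 / 4 ∧ ‖b - m‖^2 = ‖a - b‖^2 / 4 := by
    have h1 : a - b = (2:ℝ) • (a - m) := by
      have : a - b = (a - m) + (m - b) := by abel
      rw [this, ← hma]; module
    have h2 : b - m = -(a - m) := by rw [hma]; abel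
    constructor
    · rw [h1, norm_smul]; simp; ring
    · rw [h2, norm_neg, h1, norm_smul]; simp; ring
  have hmid : 2 * f m ≤ f a + f b - μ/4 * ‖a - b‖^2 := by
    rw [enorm.1] at hsca
    rw [enorm.2] at hscb
    linarith [hsca, hscb, einner]
  -- norm lower bound
  set I : ℝ := ⟪g x, g y⟫ with hI
  set S : ℝ := Real.sin (InnerProductGeometry.angle (g x) (g y)) ^ 2 with hS
  have hScos : S = 1 - I^2 / (‖g x‖^2 * ‖g y‖^2) := by
    rw [hS, Real.sin_sq, InnerProductGeometry.cos_angle, hI]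
    rw [div_pow]
    congr 1
    rw [mul_pow]
  have hSnn : (0:ℝ) ≤ S := by rw [hS]; positivity
  have hab : a - b = (t - s₁) • g x + s₂ • g y := by
    rw [ha, hb, hy]; module
  have habn : ‖a - b‖^2 = (t - s₁)^2 * ‖g x‖^2 + 2 * (t - s₁) * s₂ * I + s₂^2 * ‖g y‖^2 := by
    rw [hab, norm_add_sq_real, norm_smul, norm_smul, real_inner_smul_left,
      real_inner_smul_right, Real.norm_eq_abs, Real.norm_eq_abs, mul_pow, mul_pow,
      sq_abs, sq_abs, ← hI]
    ring
  have hnorm1 : s₂^2 * ‖g y‖^2 * S ≤ ‖a - b‖^2 := by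
    rw [habn, hScos]
    have expand : s₂^2 * ‖g y‖^2 * (1 - I^2 / (‖g x‖^2 * ‖g y‖^2))
        = s₂^2 * ‖g y‖^2 - s₂^2 * I^2 / ‖g x‖^2 := by
      field_simp
    rw [expand]
    have key : 0 ≤ ((t - s₁) * ‖g x‖ + s₂ * I / ‖g x‖)^2 := sq_nonneg _
    have hgx : (0:ℝ) < ‖g x‖ := norm_pos_iff.mpr hx
    have hgxne : ‖g x‖ ≠ 0 := ne_of_gt hgx
    have hgyne : ‖g y‖ ≠ 0 := norm_ne_zero_iff.mpr hgy
    have expand2 : ((t - s₁) * ‖g x‖ + s₂ * I / ‖g x‖)^2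
        = (t - s₁)^2 * ‖g x‖^2 + 2 * (t - s₁) * s₂ * I + s₂^2 * I^2 / ‖g x‖^2 := by
      field_simp
      ring
    linarith [key, expand2]
  -- chain
  have hply : 2 * μ * (f x - f xs) ≤ ‖g y‖^2 := by
    have := plq f g μ hμ hsc xs y
    rw [le_div_iff₀ (by positivity : (0:ℝ) < 2*μ), hlevel] at this
    linarith
  have hs₂sq : 1/L^2 ≤ s₂^2 := by
    have h1 : (0:ℝ) < 1/L := by positivity
    have h2 : (1/L)^2 ≤ s₂^2 := by
      apply pow_le_pow_left₀ h1.le hs₂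
    calc 1/L^2 = (1/L)^2 := by rw [div_pow, one_pow]
      _ ≤ s₂^2 := h2
  have hnorm2 : 2*μ/L^2 * S * (f x - f xs) ≤ ‖a - b‖^2 := by
    have c1 : 1/L^2 * (2*μ*(f x - f xs)) * S ≤ s₂^2 * ‖g y‖^2 * S := by
      apply mul_le_mul_of_nonneg_right _ hSnn
      have hΔ : 0 ≤ 2*μ*(f x - f xs) :=
        mul_nonneg (by positivity) (by linarith [hmin x])
      calc 1/L^2 * (2*μ*(f x - f xs)) ≤ s₂^2 * (2*μ*(f x - f xs)) :=
            mul_le_mul_of_nonneg_right hs₂sq hΔ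
        _ ≤ s₂^2 * ‖g y‖^2 := mul_le_mul_of_nonneg_left hply (by positivity)
    calc 2*μ/L^2 * S * (f x - f xs) = 1/L^2 * (2*μ*(f x - f xs)) * S := by ring
      _ ≤ s₂^2 * ‖g y‖^2 * S := c1
      _ ≤ ‖a - b‖^2 := hnorm1
  -- combine
  have hcoef : (L / μ - 1) / (L / μ + 1) - S / (4 * (L / μ) ^ 2)
      = (L - μ)/(L + μ) - μ^2 * S/(4 * L^2) := by
    have hμ' : μ ≠ 0 := ne_of_gt hμ
    have hL' : L ≠ 0 := ne_of_gt hL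
    have hLμ : L + μ ≠ 0 := by positivity
    have h1 : (L / μ - 1) / (L / μ + 1) = (L - μ)/(L + μ) := by
      rw [div_sub_one hμ', div_add_one hμ', div_div_div_cancel_right₀ hμ']
    have h2 : S / (4 * (L / μ) ^ 2) = μ^2 * S/(4 * L^2) := by
      field_simp
    rw [h1, h2]
  rw [hcoef]
  have step : μ/4 * (2*μ/L^2 * S * (f x - f xs)) ≤ μ/4 * ‖a - b‖^2 :=
    mul_le_mul_of_nonneg_left hnorm2 (by positivity)
  have final : 2 * (f m - f xs) ≤ 2 * ((L - μ)/(L + μ) - μ^2 * S/(4 * L^2)) * (f x - f xs) := by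
    have : μ/4 * (2*μ/L^2 * S * (f x - f xs)) = 2 * (μ^2 * S/(4 * L^2)) * (f x - f xs) := by
      field_simp
    linarith [hmid, hca, hcb, step, this]
  linarith [hfm, final]
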